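/- Each unital C*-algebra without characters contains a unital separable sub-C*-algebra without characters; that is, if A is a unital C*-algebra admitting no characters, then there exists a closed star-subalgebra B of A containing the unit of A such that B is separable (as a topological space) and B admits no characters. -/

import Mathlib

open TopologicalSpace Metric

theorem sep_aux (A : Type*) [CStarAlgebra A] (s : Set A) (hs : s.Countable) :
    TopologicalSpace.SeparableSpace ((StarAlgebra.adjoin ℂ s).topologicalClosure) := by
  have hss : (s ∪ star s).Countable := by
    refine hs.union ?_
    have : star s = star '' s := by
      ext x; simp only [Set.mem_star, Set.mem_image]
      exact ⟨fun h => ⟨star x, h, star_star x⟩, by rintro ⟨y, hy, rfl⟩; simpa⟩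
    rw [this]; exact hs.image star
  have hcs : ((Submonoid.closure (s ∪ star s) : Submonoid A) : Set A).Countable := by
    rw [Submonoid.closure_eq_mrange, MonoidHom.coe_mrange]
    have : Countable (s ∪ star s : Set A) := hss.to_subtype
    have : Countable (FreeMonoid (s ∪ star s : Set A)) :=
      Countable.of_equiv _ FreeMonoid.toList.symm
    exact Set.countable_range _
  have hsep : IsSeparable ((StarAlgebra.adjoin ℂ s : StarSubalgebra ℂ A) : Set A) := by
    have := hcs.isSeparable.span (R := ℂ)
    rwa [show (Submodule.span ℂ ((Submonoid.closure (s ∪ star s) : Submonoid A) : Set A) : Set A)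
        = ((StarAlgebra.adjoin ℂ s : StarSubalgebra ℂ A) : Set A) by
      rw [← StarAlgebra.adjoin_eq_span]; rfl] at this
  have h2 : IsSeparable (((StarAlgebra.adjoin ℂ s).topologicalClosure : StarSubalgebra ℂ A) : Set A) := by
    have h3 : (((StarAlgebra.adjoin ℂ s).topologicalClosure : StarSubalgebra ℂ A) : Set A)
        = closure ((StarAlgebra.adjoin ℂ s : StarSubalgebra ℂ A) : Set A) := rfl
    rw [h3]
    exact hsep.closure
  exact h2.separableSpace

theorem ext_aux (A : Type*) [CStarAlgebra A] [Nontrivial A] (B : StarSubalgebra ℂ A)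
    (hB : IsClosed (B : Set A)) (χ : B →ₐ[ℂ] ℂ) :
    ∃ g : StrongDual ℂ A, ‖g‖ ≤ 1 ∧ (∀ x : B, g x = χ x) := by
  haveI : CompleteSpace B := hB.completeSpace_coe
  haveI : Nontrivial B := ⟨⟨1, 0, fun hh => one_ne_zero (congrArg Subtype.val hh)⟩⟩
  have hnorm : ∀ x : B, ‖χ x‖ ≤ ‖x‖ := fun x => AlgHom.norm_apply_le_self χ x
  let p : Submodule ℂ A := Subalgebra.toSubmodule B.toSubalgebra
  let f : p →L[ℂ] ℂ := χ.toContinuousLinearMap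
  obtain ⟨g, hg, hgn⟩ := exists_extension_norm_eq p f
  refine ⟨g, ?_, fun x => hg x⟩
  rw [hgn]
  refine ContinuousLinearMap.opNorm_le_bound _ zero_le_one fun x => ?_
  simpa [f] using (hnorm x).trans_eq (by rfl)



/-- Each unital C*-algebra without characters contains a unital separable
sub-C*-algebra without characters: if `A` is a unital C*-algebra admitting no characters
(a character being a unital algebra homomorphism to `ℂ`), then there is a closed
star-subalgebra `B` of `A` (automatically containing the unit of `A`) which is separable
as a topological space and admits no characters. -/
theorem exists_separable_subalgebra_without_characters (A : Type*) [CStarAlgebra A]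
    (h : IsEmpty (A →ₐ[ℂ] ℂ)) :
    ∃ B : StarSubalgebra ℂ A, IsClosed (B : Set A) ∧
      TopologicalSpace.SeparableSpace B ∧ IsEmpty (B →ₐ[ℂ] ℂ) := by
  by_cases hA : Subsingleton A
  · refine ⟨⊥, ?_, ?_, ?_⟩
    · have huniv : ((⊥ : StarSubalgebra ℂ A) : Set A) = Set.univ :=
        Set.eq_univ_of_forall fun x => by
          rw [Subsingleton.elim x (algebraMap ℂ A 0)]
          exact StarSubalgebra.algebraMap_mem _ 0
      rw [huniv]; exact isClosed_univ
    · haveI : Subsingleton (⊥ : StarSubalgebra ℂ A) :=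
        ⟨fun a b => Subtype.ext (Subsingleton.elim _ _)⟩
      infer_instance
    · exact ⟨fun φ => one_ne_zero (by
        rw [← map_one φ, Subsingleton.elim (1 : (⊥ : StarSubalgebra ℂ A)) 0, map_zero])⟩
  · haveI : Nontrivial A := not_subsingleton_iff_nontrivial.mp hA
    classical
    by_contra hc
    push_neg at hc
    -- characters exist on every closed separable star subalgebra
    have hchar : ∀ B : StarSubalgebra ℂ A, IsClosed (B : Set A) →
        TopologicalSpace.SeparableSpace B → Nonempty (B →ₐ[ℂ] ℂ) := by
      intro B h1 h2
      rcases hc B h1 h2 with h3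
      exact h3
    -- the compact sets
    set K : Finset A → Set (WeakDual ℂ A) := fun F =>
      (WeakDual.toStrongDual ⁻¹' closedBall 0 1) ∩
        ({ψ | ψ 1 = 1} ∩ ⋂ x ∈ F, ⋂ y ∈ F, {ψ | ψ (x * y) = ψ x * ψ y}) with hK
    have hKcl : ∀ F, IsClosed (K F) := by
      intro F
      refine (WeakDual.isClosed_closedBall 0 1).inter (IsClosed.inter ?_ ?_)
      · exact isClosed_eq (WeakDual.eval_continuous 1) continuous_const
      · refine isClosed_biInter fun x _ => isClosed_biInter fun y _ => ?_
        exact isClosed_eq (WeakDual.eval_continuous _)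
          ((WeakDual.eval_continuous _).mul (WeakDual.eval_continuous _))
    have hKcp : ∀ F, IsCompact (K F) :=
      fun F => (WeakDual.isCompact_closedBall (𝕜 := ℂ) (E := A) 0 1).of_isClosed_subset (hKcl F)
        Set.inter_subset_left
    have hKne : ∀ F, (K F).Nonempty := by
      intro F
      set B := (StarAlgebra.adjoin ℂ (F : Set A)).topologicalClosure with hBdef
      have hBcl : IsClosed (B : Set A) := StarSubalgebra.isClosed_topologicalClosure _
      have hBsep : TopologicalSpace.SeparableSpace B :=
        sep_aux A (F : Set A) F.finite_toSet.countable
      obtain ⟨χ⟩ := hchar B hBcl hBsep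
      obtain ⟨g, hg1, hg2⟩ := ext_aux A B hBcl χ
      have hmem : ∀ x ∈ F, x ∈ B := fun x hx =>
        (StarAlgebra.adjoin ℂ (F : Set A)).le_topologicalClosure
          (StarAlgebra.subset_adjoin ℂ (F : Set A) hx)
      refine ⟨StrongDual.toWeakDual g, ?_, ?_, ?_⟩
      · simpa [dist_eq_norm] using hg1
      · have h1B : (1 : A) ∈ B := one_mem B
        have h4 := hg2 ⟨1, h1B⟩
        have h5 : (⟨1, h1B⟩ : B) = 1 := rfl
        rw [h5, map_one] at h4
        simpa using h4
      · simp only [Set.mem_iInter]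
        intro x hx y hy
        have hxB := hmem x hx
        have hyB := hmem y hy
        have hxyB : x * y ∈ B := mul_mem hxB hyB
        have e1 : g (x * y) = χ (⟨x, hxB⟩ * ⟨y, hyB⟩) := hg2 ⟨x * y, hxyB⟩
        have e2 : g x = χ ⟨x, hxB⟩ := hg2 ⟨x, hxB⟩
        have e3 : g y = χ ⟨y, hyB⟩ := hg2 ⟨y, hyB⟩
        show g (x * y) = g x * g y
        rw [e1, e2, e3, map_mul]
    have hKmono : ∀ {F1 F2 : Finset A}, F1 ⊆ F2 → K F2 ⊆ K F1 := by
      rintro F1 F2 hsub ψ ⟨hb, h1, hm⟩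
      simp only [Set.mem_iInter] at hm
      refine ⟨hb, h1, ?_⟩
      simp only [Set.mem_iInter]
      exact fun x hx y hy => hm x (hsub hx) y (hsub hy)
    have hKdir : Directed (· ⊇ ·) K :=
      fun F1 F2 => ⟨F1 ∪ F2, hKmono Finset.subset_union_left, hKmono Finset.subset_union_right⟩
    obtain ⟨ψ, hψ⟩ := IsCompact.nonempty_iInter_of_directed_nonempty_isCompact_isClosed
      K hKdir hKne hKcp hKcl
    simp only [Set.mem_iInter] at hψ
    have hone : ψ 1 = 1 := (hψ ∅).2.1
    have hmul : ∀ a b : A, ψ (a * b) = ψ a * ψ b := by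
      intro a b
      have := (hψ {a, b}).2.2
      simp only [Set.mem_iInter] at this
      exact this a (by simp) b (by simp)
    exact h.false
      { toFun := ψ
        map_one' := hone
        map_mul' := hmul
        map_zero' := map_zero ψ
        map_add' := map_add ψ
        commutes' := fun c => by
          simp [Algebra.algebraMap_eq_smul_one, map_smul, hone] }
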